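/- Let h ∈ C[0,1] be real valued with x ↦ (h(x) − h(0))/x ∈ L¹(0,1), and 1 ≤ p < ∞. Then for some (equivalently every) x ∈ (0,1), the integral ∫₀¹ exp(p ∫_x^w h(y)/y dy) dw is finite if and only if h(0) > −1/p. -/

import Mathlib

open Set MeasureTheory

/-- For real-valued `h ∈ C[0,1]` with `(h(x) − h(0))/x ∈ L¹(0,1)` and
`1 ≤ p < ∞`, for some (equivalently every) `x ∈ (0,1)` one has
`∫₀¹ exp(p ∫_x^w h(y)/y dy) dw < ∞` iff `h(0) > −1/p`. -/
theorem dawidowicz_poskrobko_criterion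
    (h : ℝ → ℝ) (hh : ContinuousOn h (Icc (0:ℝ) 1))
    (hL1 : IntegrableOn (fun x => (h x - h 0) / x) (Ioo (0:ℝ) 1) volume)
    (p : ℝ) (hp : 1 ≤ p) :
    ∀ x ∈ Ioo (0:ℝ) 1,
      (IntegrableOn (fun w => Real.exp (p * ∫ y in x..w, h y / y)) (Ioo (0:ℝ) 1) volume ↔
        h 0 > -1 / p) := by
  intro x hx
  obtain ⟨hx0, hx1⟩ := hx
  have hp0 : (0:ℝ) < p := lt_of_lt_of_le one_pos hp
  set a := p * h 0 with ha_def
  set g : ℝ → ℝ := (Ioo (0:ℝ) 1).indicator (fun y => (h y - h 0) / y) with hg_def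
  have hg_int : Integrable g := (integrable_indicator_iff measurableSet_Ioo).mpr hL1
  set G : ℝ → ℝ := fun w => ∫ y in x..w, g y with hG_def
  have hG_cont : Continuous G :=
    intervalIntegral.continuous_primitive (fun a b => hg_int.intervalIntegrable) x
  set C : ℝ := ∫ y, ‖g y‖ with hC_def
  have hC0 : 0 ≤ C := integral_nonneg fun y => norm_nonneg _
  have hGC : ∀ w, |G w| ≤ C := by
    intro w
    rw [← Real.norm_eq_abs]
    calc ‖∫ y in x..w, g y‖ ≤ ∫ y in Set.uIoc x w, ‖g y‖ :=
          intervalIntegral.norm_integral_le_integral_norm_uIoc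
      _ ≤ C := setIntegral_le_integral hg_int.norm
          (Filter.Eventually.of_forall fun y => norm_nonneg _)
  set K : ℝ := p * C + |a * Real.log x| with hK_def
  have hK : ∀ w, |p * G w - a * Real.log x| ≤ K := by
    intro w
    calc |p * G w - a * Real.log x| ≤ |p * G w| + |a * Real.log x| := abs_sub _ _
      _ ≤ p * C + |a * Real.log x| := by
          have : |p * G w| = p * |G w| := by
            rw [abs_mul, abs_of_pos hp0]
          rw [this]
          exact add_le_add_left (mul_le_mul_of_nonneg_left (hGC w) hp0.le) _
  -- key pointwise identity on (0,1)
  have key : ∀ w ∈ Ioo (0:ℝ) 1,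
      Real.exp (p * ∫ y in x..w, h y / y)
        = w ^ a * Real.exp (p * G w - a * Real.log x) := by
    intro w hw
    obtain ⟨hw0, hw1⟩ := hw
    have hsub : uIcc x w ⊆ Ioo (0:ℝ) 1 := by
      intro y hy
      rw [mem_uIcc] at hy
      rcases hy with ⟨h1, h2⟩ | ⟨h1, h2⟩
      · exact ⟨lt_of_lt_of_le hx0 h1, lt_of_le_of_lt h2 hw1⟩
      · exact ⟨lt_of_lt_of_le hw0 h1, lt_of_le_of_lt h2 hx1⟩
    have hsub' : uIcc x w ⊆ Icc (0:ℝ) 1 := hsub.trans Ioo_subset_Icc_self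
    have hne : ∀ y ∈ uIcc x w, y ≠ 0 := fun y hy => ne_of_gt (hsub hy).1
    have hzero : (0:ℝ) ∉ uIcc x w := fun hc => (hne 0 hc) rfl
    have hcont1 : ContinuousOn (fun y : ℝ => h 0 / y) (uIcc x w) :=
      continuousOn_const.div continuousOn_id hne
    have hcont2 : ContinuousOn (fun y : ℝ => (h y - h 0) / y) (uIcc x w) :=
      ((hh.mono hsub').sub continuousOn_const).div continuousOn_id hne
    have hint1 : IntervalIntegrable (fun y : ℝ => h 0 / y) volume x w :=
      hcont1.intervalIntegrable
    have hint2 : IntervalIntegrable (fun y : ℝ => (h y - h 0) / y) volume x w :=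
      hcont2.intervalIntegrable
    have hsplit : ∫ y in x..w, h y / y
        = (∫ y in x..w, h 0 / y) + ∫ y in x..w, (h y - h 0) / y := by
      rw [← intervalIntegral.integral_add hint1 hint2]
      apply intervalIntegral.integral_congr
      intro y hy
      have : y ≠ 0 := hne y hy
      field_simp
      ring
    have hlog : (∫ y in x..w, h 0 / y) = a / p * (Real.log w - Real.log x) := by
      have : (∫ y in x..w, h 0 / y) = h 0 * ∫ y in x..w, 1 / y := by
        rw [← intervalIntegral.integral_const_mul]
        congr 1 with y
        ring
      rw [this, integral_one_div hzero, Real.log_div (ne_of_gt hw0) (ne_of_gt hx0)]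
      rw [ha_def]
      field_simp
    have hGeq : (∫ y in x..w, (h y - h 0) / y) = G w := by
      rw [hG_def]
      apply intervalIntegral.integral_congr
      intro y hy
      rw [hg_def, Set.indicator_of_mem (hsub hy)]
    have hexp : p * ∫ y in x..w, h y / y
        = a * Real.log w + (p * G w - a * Real.log x) := by
      rw [hsplit, hlog, hGeq]
      field_simp
      ring
    rw [hexp, Real.exp_add, Real.rpow_def_of_pos hw0, mul_comm (Real.log w) a]
  have hcong : IntegrableOn (fun w => Real.exp (p * ∫ y in x..w, h y / y))
        (Ioo (0:ℝ) 1) volume ↔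
      IntegrableOn (fun w : ℝ => w ^ a * Real.exp (p * G w - a * Real.log x))
        (Ioo (0:ℝ) 1) volume :=
    integrableOn_congr_fun key measurableSet_Ioo
  have hmeas_rpow : AEStronglyMeasurable (fun w : ℝ => w ^ a)
      (volume.restrict (Ioo (0:ℝ) 1)) := by
    apply ContinuousOn.aestronglyMeasurable _ measurableSet_Ioo
    exact continuousOn_id.rpow_const fun w hw => Or.inl (ne_of_gt hw.1)
  have hcontF2 : Continuous (fun w : ℝ => Real.exp (p * G w - a * Real.log x)) :=
    Real.continuous_exp.comp ((continuous_const.mul hG_cont).sub continuous_const)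
  have hmeasF2 : AEStronglyMeasurable
      (fun w : ℝ => w ^ a * Real.exp (p * G w - a * Real.log x))
      (volume.restrict (Ioo (0:ℝ) 1)) := by
    apply ContinuousOn.aestronglyMeasurable _ measurableSet_Ioo
    exact (continuousOn_id.rpow_const fun w hw => Or.inl (ne_of_gt hw.1)).mul
      hcontF2.continuousOn
  have hiff2 : IntegrableOn (fun w : ℝ => w ^ a * Real.exp (p * G w - a * Real.log x))
      (Ioo (0:ℝ) 1) volume ↔ -1 < a := by
    constructor
    · intro hInt
      have hrpow : IntegrableOn (fun w : ℝ => w ^ a) (Ioo (0:ℝ) 1) volume := by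
        apply Integrable.mono'
          ((hInt.norm).const_mul (Real.exp K)) hmeas_rpow
        rw [ae_restrict_iff' measurableSet_Ioo]
        refine Filter.Eventually.of_forall fun w hw => ?_
        have hw0 : (0:ℝ) < w := hw.1
        have hwa : (0:ℝ) ≤ w ^ a := Real.rpow_nonneg hw0.le a
        set t := p * G w - a * Real.log x with ht_def
        have htK : -K ≤ t := neg_le_of_abs_le (hK w)
        have h1 : ‖w ^ a‖ = w ^ a := Real.norm_of_nonneg hwa
        have h2 : ‖w ^ a * Real.exp t‖ = w ^ a * Real.exp t := by
          rw [Real.norm_of_nonneg (mul_nonneg hwa (Real.exp_pos t).le)]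
        rw [h1, h2]
        calc w ^ a = w ^ a * (Real.exp K * Real.exp t) * Real.exp (-(K + t)) := by
              rw [mul_assoc, ← Real.exp_add, ← Real.exp_add,
                show K + t + -(K + t) = 0 by ring, Real.exp_zero, mul_one]
          _ ≤ w ^ a * (Real.exp K * Real.exp t) * 1 := by
              apply mul_le_mul_of_nonneg_left
              · exact Real.exp_le_one_iff.mpr (by linarith)
              · positivity
          _ = Real.exp K * (w ^ a * Real.exp t) := by ring
      exact (intervalIntegral.integrableOn_Ioo_rpow_iff zero_lt_one).mp hrpow
    · intro ha
      have hrpow : IntegrableOn (fun w : ℝ => w ^ a) (Ioo (0:ℝ) 1) volume :=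
        (intervalIntegral.integrableOn_Ioo_rpow_iff zero_lt_one).mpr ha
      apply Integrable.mono' ((hrpow.norm).const_mul (Real.exp K)) hmeasF2
      rw [ae_restrict_iff' measurableSet_Ioo]
      refine Filter.Eventually.of_forall fun w hw => ?_
      have hw0 : (0:ℝ) < w := hw.1
      have hwa : (0:ℝ) ≤ w ^ a := Real.rpow_nonneg hw0.le a
      set t := p * G w - a * Real.log x with ht_def
      have htK : t ≤ K := le_of_abs_le (hK w)
      have h2 : ‖w ^ a * Real.exp t‖ = w ^ a * Real.exp t := by
        rw [Real.norm_of_nonneg (mul_nonneg hwa (Real.exp_pos t).le)]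
      rw [h2, Real.norm_of_nonneg hwa]
      calc w ^ a * Real.exp t ≤ w ^ a * Real.exp K :=
            mul_le_mul_of_nonneg_left (Real.exp_le_exp.mpr htK) hwa
        _ = Real.exp K * w ^ a := by ring
  rw [hcong, hiff2, ha_def]
  rw [gt_iff_lt, div_lt_iff₀ hp0, mul_comm]
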